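/- arXiv:2010.03478 — 5 statements merged into one kernel-verified Lean document; each statement's English description precedes it below -/
import Mathlib

section
/- For γ_i > 0, ε > 0, Δq > 0, and the summation curve S(x) = Σ_{k∈ℤ} √(γ_i/(πε)) exp(−(γ_i/ε)(x − kΔq)²), one has for every positive integer s and all x ∈ ℝ the bound |S(x) − 1/Δq| ≤ (2·s!·γ_i^s/(π^{2s} ε^s)) · (Δq)^{2s−1}. -/
open Real

private theorem poisson_aux (A u : ℝ) (hA : 0 < A) :
    (∑' n : ℤ, Complex.exp (-(π:ℂ) / A * ((n:ℂ) + u) ^ 2)) =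
      (Real.sqrt A : ℂ) *
        ∑' n : ℤ, Complex.exp (-(π:ℂ) * A * (n:ℂ) ^ 2 - 2 * π * Complex.I * u * n) := by
  have key := Complex.tsum_exp_neg_quadratic (a := (A:ℂ)) (by simpa using hA) (-(Complex.I*u))
  have hIu : (Complex.I : ℂ) * (-(Complex.I * u)) = (u : ℂ) := by
    rw [mul_neg, ← mul_assoc, Complex.I_mul_I]; ring
  rw [hIu] at key
  have hsq : ((A:ℂ)) ^ (1/2 : ℂ) = (Real.sqrt A : ℂ) := by
    rw [Real.sqrt_eq_rpow, Complex.ofReal_cpow hA.le]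
    norm_num
  rw [hsq] at key
  have hne : (Real.sqrt A : ℂ) ≠ 0 := by
    simpa using (Real.sqrt_ne_zero'.2 hA)
  have h2 : (∑' n : ℤ, Complex.exp (-(π:ℂ) * A * (n:ℂ) ^ 2 - 2 * π * Complex.I * u * n)) =
      ∑' n : ℤ, Complex.exp (-(π:ℂ) * A * (n:ℂ) ^ 2 + 2 * π * (-(Complex.I * u)) * n) := by
    congr 1; ext n; congr 1; ring
  rw [h2, key, ← mul_assoc, mul_one_div, div_self hne, one_mul]

private theorem geom_hasSum (d : ℝ) (hd : 0 < d) :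
    HasSum (fun n : ℤ => if n = 0 then (0:ℝ) else rexp (-d) ^ n.natAbs)
      (2 * (rexp (-d) / (1 - rexp (-d)))) := by
  set r := rexp (-d) with hr
  have hr0 : 0 ≤ r := (Real.exp_pos _).le
  have hr1 : r < 1 := Real.exp_lt_one_iff.2 (by linarith)
  set G : ℤ → ℝ := fun n => if n = 0 then (0:ℝ) else r ^ n.natAbs with hGdef
  have hgeom : HasSum (fun n : ℕ => r ^ n * r) (r / (1 - r)) := by
    have h := (hasSum_geometric_of_lt_one hr0 hr1).mul_right r
    rwa [div_eq_mul_inv, mul_comm]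
  have hpos : HasSum (fun n : ℕ => G n) (r / (1 - r)) := by
    have h1 : HasSum (fun n : ℕ => G (↑(n + 1))) (r / (1 - r)) := by
      have heq : (fun n : ℕ => G (↑(n + 1))) = fun n : ℕ => r ^ n * r := by
        funext n
        simp only [hGdef]
        rw [if_neg (by omega : ¬((n + 1 : ℕ) : ℤ) = 0), Int.natAbs_natCast, pow_succ]
      rw [heq]; exact hgeom
    have h2 := (hasSum_nat_add_iff (f := fun n : ℕ => G n) 1).1 (by exact_mod_cast h1)
    simpa [hGdef] using h2
  have hneg : HasSum (fun n : ℕ => G (-(↑n + 1))) (r / (1 - r)) := by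
    have heq : (fun n : ℕ => G (-(↑n + 1))) = fun n : ℕ => r ^ n * r := by
      funext n
      have hne : ¬(-((n:ℤ) + 1)) = 0 := by omega
      have hab : (-((n:ℤ) + 1)).natAbs = n + 1 := by omega
      simp only [hGdef]
      rw [if_neg hne, hab, pow_succ]
    rw [heq]; exact hgeom
  have h := hpos.of_nat_of_neg_add_one hneg
  convert h using 1; ring

private theorem exp_sub_one_lb (d : ℝ) (hd : 0 < d) (s : ℕ) (hs : 1 ≤ s) :
    d ^ s / (s.factorial : ℝ) ≤ rexp d - 1 := by
  have hsub : ({0, s} : Finset ℕ) ⊆ Finset.range (s + 1) := by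
    intro i hi
    simp only [Finset.mem_insert, Finset.mem_singleton] at hi
    rcases hi with rfl | rfl <;> simp [Finset.mem_range]
  have hpair : ∑ i ∈ ({0, s} : Finset ℕ), d ^ i / (i.factorial : ℝ)
      = 1 + d ^ s / (s.factorial : ℝ) := by
    rw [Finset.sum_pair (by omega : 0 ≠ s)]
    simp
  have h1 : ∑ i ∈ ({0, s} : Finset ℕ), d ^ i / (i.factorial : ℝ)
      ≤ ∑ i ∈ Finset.range (s + 1), d ^ i / (i.factorial : ℝ) :=
    Finset.sum_le_sum_of_subset_of_nonneg hsub (fun i _ _ => by positivity)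
  have h2 := Real.sum_le_exp_of_nonneg hd.le (s + 1)
  rw [hpair] at h1
  linarith

theorem summation_curve_spectral_convergence
    (γi ε Δq : ℝ) (hγ : 0 < γi) (hε : 0 < ε) (hΔ : 0 < Δq)
    (S : ℝ → ℝ)
    (hS : ∀ x : ℝ, S x =
      ∑' k : ℤ, Real.sqrt (γi / (Real.pi * ε)) * Real.exp (-(γi / ε) * (x - k * Δq) ^ 2))
    (s : ℕ) (hs : 1 ≤ s) (x : ℝ) :
    |S x - 1 / Δq| ≤
      (2 * (s.factorial : ℝ) * γi ^ s / (Real.pi ^ (2 * s) * ε ^ s)) * Δq ^ (2 * s - 1) := by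
  have hπ := Real.pi_pos
  set d : ℝ := π ^ 2 * ε / (γi * Δq ^ 2) with hddef
  have hd : 0 < d := by positivity
  set A : ℝ := π * ε / (γi * Δq ^ 2) with hAdef
  have hA : 0 < A := by positivity
  set u : ℝ := -(x / Δq) with hudef
  set F : ℤ → ℂ :=
    fun n => Complex.exp (-(π:ℂ) * A * (n:ℂ) ^ 2 - 2 * π * Complex.I * u * n) with hFdef
  -- summability of F
  have hFsum : Summable F := by
    have heq : F = fun n => jacobiTheta₂_term n (-(u:ℂ)) ((A:ℂ) * Complex.I) := by
      funext n
      simp only [hFdef, jacobiTheta₂_term]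
      congr 1
      ring_nf
      rw [Complex.I_sq]
      ring
    rw [heq]
    exact (summable_jacobiTheta₂_term_iff _ _).2 (by simpa using hA)
  -- norm of F
  have hπA : π * A = d := by
    rw [hAdef, hddef]; field_simp
  have hFnorm : ∀ n : ℤ, ‖F n‖ = rexp (-d * (n:ℝ) ^ 2) := by
    intro n
    have hexp : (-(π:ℂ) * A * (n:ℂ) ^ 2 - 2 * π * Complex.I * u * n)
        = ((-(π * A) * (n:ℝ) ^ 2 : ℝ) : ℂ) + ((-(2 * π * u * n) : ℝ) : ℂ) * Complex.I := by
      push_cast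
      ring
    simp only [hFdef]
    rw [hexp, Complex.norm_exp]
    have hz : (((-(2 * π * u * n) : ℝ) : ℂ) * Complex.I).re = 0 := by simp
    rw [Complex.add_re, hz, add_zero, Complex.ofReal_re, hπA]
  -- Poisson summation: S x = (1/Δq) * (∑' F).re
  have hp := poisson_aux A u hA
  have hterm : ∀ k : ℤ, -(π / A) * ((k:ℝ) + u) ^ 2 = -(γi / ε) * (x - k * Δq) ^ 2 := by
    intro k
    have h1 : π / A = γi / ε * Δq ^ 2 := by
      rw [hAdef]; field_simp
    rw [h1, hudef]
    have h2 : ((k:ℝ) + -(x / Δq)) ^ 2 * Δq ^ 2 = (x - k * Δq) ^ 2 := by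
      field_simp; ring
    linear_combination (-(γi / ε)) * h2
  have hT : ((∑' k : ℤ, rexp (-(γi / ε) * (x - k * Δq) ^ 2) : ℝ) : ℂ)
      = (Real.sqrt A : ℂ) * ∑' n : ℤ, F n := by
    rw [Complex.ofReal_tsum, ← hp]
    congr 1; funext k
    rw [Complex.ofReal_exp]
    congr 1
    rw [← hterm k]
    push_cast
    ring
  have hTre : (∑' k : ℤ, rexp (-(γi / ε) * (x - k * Δq) ^ 2))
      = Real.sqrt A * (∑' n : ℤ, F n).re := by
    have := congrArg Complex.re hT
    simpa [Complex.re_ofReal_mul] using this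
  have hSx : S x = (1 / Δq) * (∑' n : ℤ, F n).re := by
    rw [hS x, tsum_mul_left, hTre, ← mul_assoc]
    congr 1
    rw [← Real.sqrt_mul (by positivity) A]
    have h1 : γi / (π * ε) * A = (1 / Δq) ^ 2 := by
      rw [hAdef]; field_simp
    rw [h1, Real.sqrt_sq (by positivity)]
  -- split off the n = 0 term
  have hF0 : F 0 = 1 := by simp [hFdef]
  have hsplit := Summable.tsum_eq_add_tsum_ite hFsum 0
  rw [hF0] at hsplit
  -- bound the tail
  have hnormite : (fun n : ℤ => ‖if n = 0 then (0:ℂ) else F n‖)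
      = fun n : ℤ => if n = 0 then (0:ℝ) else rexp (-d * (n:ℝ) ^ 2) := by
    funext n
    split_ifs <;> simp [hFnorm n]
  have hle : ∀ n : ℤ, (if n = 0 then (0:ℝ) else rexp (-d * (n:ℝ) ^ 2))
      ≤ (if n = 0 then (0:ℝ) else rexp (-d) ^ n.natAbs) := by
    intro n
    split_ifs with h
    · exact le_rfl
    · rw [← Real.exp_nat_mul]
      apply Real.exp_le_exp.2
      have h1 : 1 ≤ n.natAbs := by omega
      have h1' : (1:ℝ) ≤ (n.natAbs : ℝ) := by exact_mod_cast h1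
      have h2 : ((n:ℝ)) ^ 2 = ((n.natAbs : ℝ)) ^ 2 := by
        rw [Nat.cast_natAbs, Int.cast_abs]
        exact (sq_abs _).symm
      rw [h2]
      have h3 : (n.natAbs:ℝ) ≤ (n.natAbs:ℝ) ^ 2 := by nlinarith
      nlinarith [mul_le_mul_of_nonneg_left h3 hd.le]
  have hGsum := geom_hasSum d hd
  have hnonneg : ∀ n : ℤ, 0 ≤ (if n = 0 then (0:ℝ) else rexp (-d * (n:ℝ) ^ 2)) := by
    intro n; split_ifs <;> positivity
  have hsumtail : Summable (fun n : ℤ => if n = 0 then (0:ℝ) else rexp (-d * (n:ℝ) ^ 2)) :=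
    hGsum.summable.of_nonneg_of_le hnonneg hle
  have htail_le : (∑' n : ℤ, if n = 0 then (0:ℝ) else rexp (-d * (n:ℝ) ^ 2))
      ≤ 2 * (rexp (-d) / (1 - rexp (-d))) := by
    calc (∑' n : ℤ, if n = 0 then (0:ℝ) else rexp (-d * (n:ℝ) ^ 2))
        ≤ ∑' n : ℤ, (if n = 0 then (0:ℝ) else rexp (-d) ^ n.natAbs) :=
          Summable.tsum_le_tsum hle hsumtail hGsum.summable
      _ = 2 * (rexp (-d) / (1 - rexp (-d))) := hGsum.tsum_eq
  have hre : |(∑' n : ℤ, F n).re - 1| ≤ 2 * (rexp (-d) / (1 - rexp (-d))) := by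
    have h1 : (∑' n : ℤ, F n).re - 1 = (∑' n : ℤ, if n = 0 then (0:ℂ) else F n).re := by
      rw [hsplit]; simp
    rw [h1]
    calc |(∑' n : ℤ, if n = 0 then (0:ℂ) else F n).re|
        ≤ ‖∑' n : ℤ, if n = 0 then (0:ℂ) else F n‖ := Complex.abs_re_le_norm _
      _ ≤ ∑' n : ℤ, ‖if n = 0 then (0:ℂ) else F n‖ := by
          apply norm_tsum_le_tsum_norm
          rw [hnormite]; exact hsumtail
      _ = ∑' n : ℤ, (if n = 0 then (0:ℝ) else rexp (-d * (n:ℝ) ^ 2)) := by rw [hnormite]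
      _ ≤ 2 * (rexp (-d) / (1 - rexp (-d))) := htail_le
  -- convert geometric bound to the factorial bound
  have hexp1 : (1:ℝ) < rexp d := by
    rw [← Real.exp_zero]; exact Real.exp_lt_exp.2 hd
  have hgeom_eq : rexp (-d) / (1 - rexp (-d)) = 1 / (rexp d - 1) := by
    rw [Real.exp_neg]
    have h0 : rexp d ≠ 0 := (Real.exp_pos d).ne'
    field_simp
  have hfact := exp_sub_one_lb d hd s hs
  have hfs : (0:ℝ) < d ^ s / (s.factorial : ℝ) := by positivity
  have hb : 2 * (rexp (-d) / (1 - rexp (-d))) ≤ 2 * ((s.factorial : ℝ) / d ^ s) := by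
    rw [hgeom_eq]
    have := one_div_le_one_div_of_le hfs hfact
    rw [one_div_div] at this
    linarith
  -- final arithmetic
  have hkey : |S x - 1 / Δq| ≤ (1 / Δq) * (2 * ((s.factorial : ℝ) / d ^ s)) := by
    rw [hSx, ← mul_sub_one, abs_mul, abs_of_pos (by positivity : (0:ℝ) < 1 / Δq)]
    exact mul_le_mul_of_nonneg_left (le_trans hre hb) (by positivity)
  refine le_trans hkey (le_of_eq ?_)
  have hpows : Δq ^ (2 * s) = Δq ^ (2 * s - 1) * Δq := by
    rw [← pow_succ]
    congr 1
    omega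
  rw [hddef]
  rw [div_pow, mul_pow, ← pow_mul, mul_pow, ← pow_mul]
  field_simp
  rw [hpows]
  ring
end

section
/- Let ε > 0, b ∈ ℝ, and define f(p) = exp(−p²/(2ε) + i b p / ε) for p ∈ ℝ. Then for every integer s ≥ 1 and every p ∈ ℝ, the s-th derivative satisfies |f^{(s)}(p)| ≤ e^{−p²/(2ε)} · s! · Σ_{m=0}^{⌊s/2⌋} (|p| + |b|)^{s−2m} / (2^m ε^{s−m} m! (s−2m)!). -/
open Polynomial Complex
open scoped Nat

lemma gdb_df_fact (m : ℕ) : (2*m).factorial = 2^m * m.factorial * (2*m-1)‼ := by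
  cases m with
  | zero => simp
  | succ n =>
    have h1 := Nat.factorial_eq_mul_doubleFactorial (2*n+1)
    have h2 : (2*(n+1))‼ = 2^(n+1) * (n+1).factorial := Nat.doubleFactorial_two_mul (n+1)
    have h3 : 2*(n+1) = 2*n+1+1 := by omega
    rw [h3] at h2 ⊢
    rw [h1, h2]
    norm_num

lemma gdb_sum_reindex_even (s : ℕ) (g : ℕ → ℝ) (hg : ∀ k, Odd (s + k) → g k = 0) :
    ∑ k ∈ Finset.range (s+1), g k = ∑ m ∈ Finset.range (s/2+1), g (s - 2*m) := by
  rw [← Finset.sum_filter_of_ne (p := fun k => Even (s + k))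
    (fun k _ hk => by
      by_contra h
      rw [Nat.even_iff] at h
      exact hk (hg k (Nat.odd_iff.mpr (by omega))))]
  · refine Finset.sum_nbij' (fun k => (s - k)/2) (fun m => s - 2*m) ?_ ?_ ?_ ?_ ?_
    · intro k hk
      simp only [Finset.mem_filter, Finset.mem_range, Nat.even_iff] at hk ⊢
      omega
    · intro m hm
      simp only [Finset.mem_filter, Finset.mem_range, Nat.even_iff] at hm ⊢
      omega
    · intro k hk
      simp only [Finset.mem_filter, Finset.mem_range, Nat.even_iff] at hk
      omega
    · intro m hm
      simp only [Finset.mem_range] at hm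
      omega
    · intro k hk
      simp only [Finset.mem_filter, Finset.mem_range, Nat.even_iff] at hk
      congr 1
      omega

lemma gdb_term_eq (ε b p : ℝ) (hε : 0 < ε) (s m : ℕ) (hm : m ∈ Finset.range (s/2+1)) :
    (1/Real.sqrt ε)^s * (|(((Polynomial.hermite s).coeff (s-2*m) : ℤ) : ℝ)| *
      ((|p| + |b|)/Real.sqrt ε)^(s-2*m))
    = (s.factorial : ℝ) * ((|p| + |b|) ^ (s - 2 * m) /
        (2 ^ m * ε ^ (s - m) * (m.factorial : ℝ) * ((s - 2 * m).factorial : ℝ))) := by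
  have hr : (0:ℝ) < Real.sqrt ε := Real.sqrt_pos.mpr hε
  set r := Real.sqrt ε with hrdef
  have hr2 : r^2 = ε := Real.sq_sqrt hε.le
  have h2m : 2*m ≤ s := by simp [Finset.mem_range] at hm; omega
  have heven : Even (s + (s - 2*m)) := ⟨s - m, by omega⟩
  have hco := Polynomial.coeff_hermite_of_even_add heven
  have hsub : s - (s - 2*m) = 2*m := by omega
  rw [hsub] at hco
  have hm2 : 2*m/2 = m := by omega
  rw [hm2] at hco
  have habs : |(((Polynomial.hermite s).coeff (s-2*m) : ℤ) : ℝ)|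
      = ((2*m-1)‼ : ℝ) * (s.choose (s-2*m) : ℝ) := by
    rw [hco]
    push_cast
    rw [abs_mul, abs_mul, _root_.abs_pow, abs_neg, abs_one, one_pow, one_mul,
      Nat.abs_cast, Nat.abs_cast]
  rw [habs, Nat.cast_choose ℝ (by omega : s - 2*m ≤ s), hsub]
  have hdf : ((2*m-1)‼ : ℝ) = ((2*m).factorial : ℝ) / (2^m * m.factorial) := by
    have := gdb_df_fact m
    have h : ((2*m-1)‼ * (2^m * m.factorial) : ℕ) = (2*m).factorial := by rw [this]; ring
    field_simp
    have h' : ((2*m-1)‼ : ℝ) * (2^m * m.factorial) = (2*m).factorial := by exact_mod_cast h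
    linear_combination h'
  rw [hdf]
  have hε' : ε ^ (s-m) = r ^ (s - 2*m) * r ^ s := by
    rw [← hr2, ← pow_mul, ← pow_add]
    congr 1
    omega
  rw [hε', div_pow]
  have hf1 : ((2*m).factorial : ℝ) ≠ 0 := by positivity
  have hf2 : (m.factorial : ℝ) ≠ 0 := by positivity
  have hf3 : ((s-2*m).factorial : ℝ) ≠ 0 := by positivity
  field_simp
  rw [one_pow, one_mul, ← mul_pow, div_mul_cancel₀ _ hr.ne']

lemma gdb_ident
    (ε b : ℝ) (hε : 0 < ε)
    (f : ℝ → ℂ)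
    (hf : ∀ p : ℝ, f p =
      Complex.exp (-(p : ℂ) ^ 2 / (2 * (ε : ℂ)) + Complex.I * (b : ℂ) * (p : ℂ) / (ε : ℂ)))
    (s : ℕ) (p : ℝ) :
    iteratedDeriv s f p = f p * (-(1 / (Real.sqrt ε : ℂ))) ^ s *
      Polynomial.aeval (((p : ℂ) - Complex.I * b) / (Real.sqrt ε : ℂ)) (Polynomial.hermite s) := by
  have hr : (0:ℝ) < Real.sqrt ε := Real.sqrt_pos.mpr hε
  set r : ℝ := Real.sqrt ε with hrdef
  have hrc : (r : ℂ) ≠ 0 := by exact_mod_cast hr.ne'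
  have hr2 : ((r : ℂ))^2 = (ε : ℂ) := by
    have : r ^ 2 = ε := Real.sq_sqrt hε.le
    exact_mod_cast this
  have hεc : (ε : ℂ) ≠ 0 := by exact_mod_cast hε.ne'
  induction s generalizing p with
  | zero => simp
  | succ s ih =>
    rw [iteratedDeriv_succ]
    have hfun : iteratedDeriv s f = fun q : ℝ =>
        f q * (-(1 / (r:ℂ))) ^ s * aeval (((q : ℂ) - Complex.I * b) / (r : ℂ)) (hermite s) := by
      funext q; exact ih q
    rw [hfun]
    have hcoe : ∀ q : ℝ, HasDerivAt (fun q : ℝ => (q : ℂ)) 1 q := fun q =>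
      Complex.ofRealCLM.hasDerivAt
    have hu : HasDerivAt (fun q : ℝ => -(q : ℂ) ^ 2 / (2 * (ε : ℂ)) + Complex.I * b * q / ε)
        (-(2 * (p:ℂ)) / (2*ε) + Complex.I * b / ε) p := by
      have h1 := ((((hcoe p).mul (hcoe p))).neg).div_const (2*(ε:ℂ))
      have h2 : HasDerivAt (fun q : ℝ => Complex.I * b * q / ε) (Complex.I * b * 1 / ε) p :=
        (((hcoe p).const_mul (Complex.I * b))).div_const _
      have h3 := h1.add h2
      have hfe : (fun q : ℝ => -((q:ℂ) * q) / (2 * (ε:ℂ)) + Complex.I * b * q / ε)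
          = (fun q : ℝ => -(q : ℂ) ^ 2 / (2 * (ε : ℂ)) + Complex.I * b * q / ε) := by
        funext q; ring
      rw [← hfe]
      refine h3.congr_deriv ?_
      ring
    have heq : (fun q : ℝ => Complex.exp (-(q : ℂ) ^ 2 / (2 * (ε : ℂ)) + Complex.I * b * q / ε)) = f := by
      funext q; rw [hf q]
    have hfd : HasDerivAt f (f p * (-(((p:ℂ) - Complex.I * b) / r) / r)) p := by
      have h := hu.cexp
      rw [heq, ← hf p] at h
      convert h using 2
      rw [← hr2]
      field_simp
      ring
    have hz : HasDerivAt (fun q : ℝ => ((q : ℂ) - Complex.I * b) / (r : ℂ)) (1 / r) p := by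
      simpa using ((hcoe p).sub_const (Complex.I * b)).div_const (r : ℂ)
    set z : ℂ := ((p : ℂ) - Complex.I * b) / (r : ℂ) with hz_def
    have hherm : ∀ (q : ℤ[X]), HasDerivAt (fun q' : ℝ =>
        aeval (((q' : ℂ) - Complex.I * b) / (r : ℂ)) q)
        ((1/(r:ℂ)) * aeval z (derivative q)) p := by
      intro q
      have hpoly : HasDerivAt (fun w : ℂ => eval w (q.map (algebraMap ℤ ℂ)))
          (eval z (derivative (q.map (algebraMap ℤ ℂ)))) z := Polynomial.hasDerivAt _ z
      have h := HasDerivAt.comp p hpoly hz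
      refine (h.congr_of_eventuallyEq (Filter.Eventually.of_forall fun q' => ?_)).congr_deriv ?_
      · simp [Function.comp, aeval_def, eval₂_eq_eval_map]
      · rw [derivative_map, mul_comm, aeval_def, eval₂_eq_eval_map]
    have hmain := (hfd.mul_const ((-(1 / (r:ℂ))) ^ s)).mul (hherm (hermite s))
    rw [(show HasDerivAt (fun q : ℝ => f q * (-(1 / (r:ℂ))) ^ s *
      aeval (((q : ℂ) - Complex.I * b) / (r : ℂ)) (hermite s)) _ p from hmain).deriv]
    rw [show hermite (s+1) = X * hermite s - derivative (hermite s) from hermite_succ s]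
    simp only [map_sub, map_mul, aeval_X]
    rw [← hz_def]
    field_simp
    linear_combination (f p * (r:ℂ)⁻¹ ^ s * z * aeval z (hermite s) * (-1) ^ s -
      f p * (r:ℂ)⁻¹ ^ s * aeval z (derivative (hermite s)) * (-1) ^ s) * mul_inv_cancel₀ hrc

theorem gaussian_derivative_bound
    (ε b : ℝ) (hε : 0 < ε)
    (f : ℝ → ℂ)
    (hf : ∀ p : ℝ, f p =
      Complex.exp (-(p : ℂ) ^ 2 / (2 * (ε : ℂ)) + Complex.I * (b : ℂ) * (p : ℂ) / (ε : ℂ)))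
    (s : ℕ) (hs : 1 ≤ s) (p : ℝ) :
    ‖iteratedDeriv s f p‖ ≤
      Real.exp (-p ^ 2 / (2 * ε)) * (s.factorial : ℝ) *
        ∑ m ∈ Finset.range (s / 2 + 1),
          (|p| + |b|) ^ (s - 2 * m) /
            (2 ^ m * ε ^ (s - m) * (m.factorial : ℝ) * ((s - 2 * m).factorial : ℝ)) := by
  have hr : (0:ℝ) < Real.sqrt ε := Real.sqrt_pos.mpr hε
  set r : ℝ := Real.sqrt ε with hrdef
  set B : ℝ := (|p| + |b|) / r with hB
  set z : ℂ := ((p : ℂ) - Complex.I * b) / (r : ℂ) with hz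
  rw [gdb_ident ε b hε f hf s p, norm_mul, norm_mul]
  have hnf : ‖f p‖ = Real.exp (-p ^ 2 / (2 * ε)) := by
    rw [hf p]
    have hw : -(p : ℂ) ^ 2 / (2 * (ε : ℂ)) + Complex.I * b * p / ε
        = Complex.ofReal (-p ^ 2 / (2 * ε)) + Complex.ofReal (b * p / ε) * Complex.I := by
      push_cast
      ring
    rw [hw, Complex.norm_exp]
    simp only [Complex.add_re, Complex.ofReal_re, Complex.re_ofReal_mul, Complex.I_re,
      mul_zero, add_zero]
  have hnc : ‖(-(1 / (r:ℂ))) ^ s‖ = (1/r)^s := by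
    rw [norm_pow, norm_neg, norm_div, norm_one, Complex.norm_real, Real.norm_eq_abs,
      abs_of_pos hr]
  have hzB : ‖z‖ ≤ B := by
    rw [hz, hB, norm_div, Complex.norm_real, Real.norm_eq_abs, abs_of_pos hr]
    gcongr
    calc ‖(p:ℂ) - Complex.I * b‖ ≤ ‖(p:ℂ)‖ + ‖Complex.I * b‖ := norm_sub_le _ _
    _ = |p| + |b| := by simp
  have haev : ‖Polynomial.aeval z (Polynomial.hermite s)‖ ≤
      ∑ k ∈ Finset.range (s+1), |(((Polynomial.hermite s).coeff k : ℤ) : ℝ)| * B^k := by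
    have hdeg : (Polynomial.hermite s).natDegree + 1 = s + 1 := by
      rw [Polynomial.natDegree_hermite]
    rw [Polynomial.aeval_eq_sum_range (R := ℤ) z, hdeg]
    refine (norm_sum_le _ _).trans (Finset.sum_le_sum ?_)
    intro k _
    rw [zsmul_eq_mul, norm_mul]
    have hcc : ‖(((Polynomial.hermite s).coeff k : ℤ) : ℂ)‖
        = |(((Polynomial.hermite s).coeff k : ℤ) : ℝ)| := by
      rw [show (((Polynomial.hermite s).coeff k : ℤ) : ℂ)
          = ((((Polynomial.hermite s).coeff k : ℤ) : ℝ) : ℂ) by push_cast; rfl,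
        Complex.norm_real, Real.norm_eq_abs]
    rw [hcc, norm_pow]
    exact mul_le_mul_of_nonneg_left (pow_le_pow_left₀ (norm_nonneg _) hzB k) (abs_nonneg _)
  have hodd : ∀ k, Odd (s + k) →
      |(((Polynomial.hermite s).coeff k : ℤ) : ℝ)| * B^k = 0 := by
    intro k hk
    simp [Polynomial.coeff_hermite_of_odd_add hk]
  have hfinal : (1/r)^s * ∑ k ∈ Finset.range (s+1),
        |(((Polynomial.hermite s).coeff k : ℤ) : ℝ)| * B^k
      = (s.factorial : ℝ) * ∑ m ∈ Finset.range (s/2+1),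
          (|p| + |b|) ^ (s - 2 * m) /
            (2 ^ m * ε ^ (s - m) * (m.factorial : ℝ) * ((s - 2 * m).factorial : ℝ)) := by
    calc (1/r)^s * ∑ k ∈ Finset.range (s+1),
          |(((Polynomial.hermite s).coeff k : ℤ) : ℝ)| * B^k
        = ∑ m ∈ Finset.range (s/2+1), (1/r)^s *
            (|(((Polynomial.hermite s).coeff (s-2*m) : ℤ) : ℝ)| * B^(s-2*m)) := by
          rw [gdb_sum_reindex_even s _ hodd, Finset.mul_sum]
      _ = ∑ m ∈ Finset.range (s/2+1), (s.factorial : ℝ) *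
            ((|p| + |b|) ^ (s - 2 * m) /
              (2 ^ m * ε ^ (s - m) * (m.factorial : ℝ) * ((s - 2 * m).factorial : ℝ))) :=
          Finset.sum_congr rfl (fun m hm => gdb_term_eq ε b p hε s m hm)
      _ = _ := (Finset.mul_sum _ _ _).symm
  calc ‖f p‖ * ‖(-(1 / (r:ℂ))) ^ s‖ * ‖Polynomial.aeval z (Polynomial.hermite s)‖
      ≤ Real.exp (-p ^ 2 / (2 * ε)) * (1/r)^s * ∑ k ∈ Finset.range (s+1),
          |(((Polynomial.hermite s).coeff k : ℤ) : ℝ)| * B^k := by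
        rw [hnf, hnc]
        exact mul_le_mul_of_nonneg_left haev (by positivity)
    _ = Real.exp (-p ^ 2 / (2 * ε)) * ((1/r)^s * ∑ k ∈ Finset.range (s+1),
          |(((Polynomial.hermite s).coeff k : ℤ) : ℝ)| * B^k) := mul_assoc _ _ _
    _ = Real.exp (-p ^ 2 / (2 * ε)) * ((s.factorial : ℝ) *
          ∑ m ∈ Finset.range (s/2+1),
            (|p| + |b|) ^ (s - 2 * m) /
              (2 ^ m * ε ^ (s - m) * (m.factorial : ℝ) * ((s - 2 * m).factorial : ℝ))) := by
        rw [hfinal]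
    _ = _ := (mul_assoc _ _ _).symm
end

section
/- Let ε > 0, b ∈ ℝ with |b| ≤ B, and f(p) = exp(−p²/(2ε) + ibp/ε). For the truncated-and-discretized approximation Q f = (2L_p/N) Σ_{j=1}^N f(p_j) with midpoints p_j of the uniform partition of [−L_p, L_p] into N intervals, one has |∫_ℝ f(p) dp − Q f| ≤ √(2πε) e^{−L_p²/(2ε)} + (L_p³/(3N²))(4(L_p + B)² ε^{−2} + ε^{−1}). -/
set_option maxHeartbeats 1000000

open MeasureTheory
open Real intervalIntegral

lemma midpoint_err (f f1 f2 : ℝ → ℂ) (hd1 : ∀ x, HasDerivAt f (f1 x) x)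
    (hd2 : ∀ x, HasDerivAt f1 (f2 x) x) (hc2 : Continuous f2)
    (m δ M : ℝ) (hδ : 0 ≤ δ) (hM : ∀ x ∈ Set.Icc (m - δ) (m + δ), ‖f2 x‖ ≤ M) :
    ‖(∫ x in (m - δ)..(m + δ), f x) - (2 * δ : ℝ) • f m‖ ≤ M * δ ^ 3 / 3 := by
  have hc1 : Continuous f1 := continuous_iff_continuousAt.2 fun x => (hd2 x).continuousAt
  have hc0 : Continuous f := continuous_iff_continuousAt.2 fun x => (hd1 x).continuousAt
  have hM0 : 0 ≤ M := le_trans (norm_nonneg _) (hM m ⟨by linarith, by linarith⟩)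
  have key : ∀ t ∈ Set.Icc (0:ℝ) δ, ‖f (m + t) + f (m - t) - (2:ℝ) • f m‖ ≤ M * t ^ 2 := by
    intro t ht
    have hH : ∀ s : ℝ, HasDerivAt (fun s => f (m + s) + f (m - s))
        (f1 (m + s) - f1 (m - s)) s := by
      intro s
      have h1 : HasDerivAt (fun s : ℝ => f (m + s)) (f1 (m + s)) s :=
        HasDerivAt.comp_const_add m s (hd1 (m + s))
      have h2 : HasDerivAt (fun s : ℝ => f (m - s)) (-f1 (m - s)) s :=
        HasDerivAt.comp_const_sub m s (hd1 (m - s))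
      have := h1.add h2
      exact this.congr_deriv (by ring)
    have hHder : (∫ s in (0:ℝ)..t, (f1 (m + s) - f1 (m - s)))
        = (f (m + t) + f (m - t)) - (f (m + 0) + f (m - 0)) := by
      refine integral_eq_sub_of_hasDerivAt (fun s _ => hH s) ?_
      exact ((hc1.comp (continuous_const.add continuous_id)).sub
        (hc1.comp (continuous_const.sub continuous_id))).intervalIntegrable 0 t
    have hbound : ∀ s ∈ Set.uIoc (0:ℝ) t, ‖f1 (m + s) - f1 (m - s)‖ ≤ 2 * M * s := by
      intro s hs
      rw [Set.uIoc_of_le ht.1] at hs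
      obtain ⟨hs0, hst⟩ := hs
      have hftc : (∫ u in (m - s)..(m + s), f2 u) = f1 (m + s) - f1 (m - s) :=
        integral_eq_sub_of_hasDerivAt (fun u _ => hd2 u) (hc2.intervalIntegrable _ _)
      rw [← hftc]
      have hb2 : ∀ u ∈ Set.uIoc (m - s) (m + s), ‖f2 u‖ ≤ M := by
        intro u hu
        rw [Set.uIoc_of_le (by linarith)] at hu
        obtain ⟨h1, h2⟩ := hu
        exact hM u ⟨by nlinarith [ht.2], by nlinarith [ht.2]⟩
      calc ‖∫ u in (m - s)..(m + s), f2 u‖ ≤ M * |(m + s) - (m - s)| :=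
            intervalIntegral.norm_integral_le_of_norm_le_const hb2
        _ = 2 * M * s := by rw [abs_of_nonneg (by linarith)]; ring
    have heq : f (m + t) + f (m - t) - (2:ℝ) • f m
        = ∫ s in (0:ℝ)..t, (f1 (m + s) - f1 (m - s)) := by
      rw [hHder]; simp [two_smul]
    rw [heq]
    calc ‖∫ s in (0:ℝ)..t, (f1 (m + s) - f1 (m - s))‖
        ≤ |∫ s in (0:ℝ)..t, 2 * M * s| := by
          refine intervalIntegral.norm_integral_le_abs_of_norm_le
            ((ae_restrict_iff' measurableSet_uIoc).2 (Filter.Eventually.of_forall hbound)) ?_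
          exact (continuous_const.mul continuous_id).intervalIntegrable 0 t
      _ = M * t ^ 2 := by
          rw [intervalIntegral.integral_const_mul, integral_id]
          rw [abs_of_nonneg (by nlinarith [sq_nonneg t, ht.1])]
          ring
  have hIf : ∀ a b : ℝ, IntervalIntegrable f volume a b := fun a b =>
    hc0.intervalIntegrable a b
  have split : (∫ x in (m - δ)..(m + δ), f x)
      = (∫ t in (0:ℝ)..δ, f (m + t)) + ∫ t in (0:ℝ)..δ, f (m - t) := by
    have e1 := integral_comp_add_left (a := (0:ℝ)) (b := δ) f m
    have e2 := integral_comp_sub_left (a := (0:ℝ)) (b := δ) f m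
    rw [add_zero] at e1
    rw [sub_zero] at e2
    rw [e1, e2]
    exact ((integral_add_adjacent_intervals (hIf (m - δ) m) (hIf m (m + δ))).symm.trans
      (add_comm _ _))
  have hconst : (2 * δ : ℝ) • f m = ∫ t in (0:ℝ)..δ, ((2:ℝ) • f m) := by
    rw [_root_.intervalIntegral.integral_const, sub_zero, smul_smul]
    congr 1
    ring
  have hi1 : IntervalIntegrable (fun t => f (m + t)) volume 0 δ :=
    (hc0.comp (continuous_const.add continuous_id)).intervalIntegrable 0 δ
  have hi2 : IntervalIntegrable (fun t => f (m - t)) volume 0 δ :=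
    (hc0.comp (continuous_const.sub continuous_id)).intervalIntegrable 0 δ
  have comb : (∫ x in (m - δ)..(m + δ), f x) - (2 * δ : ℝ) • f m
      = ∫ t in (0:ℝ)..δ, (f (m + t) + f (m - t) - (2:ℝ) • f m) := by
    rw [split, hconst, ← integral_add hi1 hi2, ← integral_sub (hi1.add hi2)
      (intervalIntegrable_const)]
  rw [comb]
  calc ‖∫ t in (0:ℝ)..δ, (f (m + t) + f (m - t) - (2:ℝ) • f m)‖
      ≤ |∫ t in (0:ℝ)..δ, M * t ^ 2| := by
        refine intervalIntegral.norm_integral_le_abs_of_norm_le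
          ((ae_restrict_iff' measurableSet_uIoc).2 (Filter.Eventually.of_forall ?_)) ?_
        · intro t ht
          rw [Set.uIoc_of_le hδ] at ht
          exact key t ⟨ht.1.le, ht.2⟩
        · exact (continuous_const.mul (continuous_pow 2)).intervalIntegrable 0 δ
    _ = M * δ ^ 3 / 3 := by
        rw [intervalIntegral.integral_const_mul, integral_pow]
        rw [abs_of_nonneg (mul_nonneg hM0 (by nlinarith [pow_nonneg hδ 3]))]
        ring


lemma gauss_tail (ε L : ℝ) (hε : 0 < ε) (hL : 0 ≤ L) :
    (∫ x in Set.Ioi L, Real.exp (-x ^ 2 / (2 * ε))) ≤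
      Real.exp (-L ^ 2 / (2 * ε)) * (Real.sqrt (2 * Real.pi * ε) / 2) := by
  have h2ε : (0:ℝ) < (2 * ε)⁻¹ := by positivity
  have hfun : (fun x : ℝ => Real.exp (-x ^ 2 / (2 * ε)))
      = fun x => Real.exp (-(2 * ε)⁻¹ * x ^ 2) := by
    funext x; congr 1; field_simp
  have hint : Integrable (fun x : ℝ => Real.exp (-x ^ 2 / (2 * ε))) := by
    rw [hfun]; exact integrable_exp_neg_mul_sq h2ε
  have hint2 : Integrable (fun x : ℝ => Real.exp (-(x - L) ^ 2 / (2 * ε))) := by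
    have : (fun x : ℝ => Real.exp (-(x - L) ^ 2 / (2 * ε)))
        = fun x => Real.exp (-(2 * ε)⁻¹ * (x - L) ^ 2) := by
      funext x; congr 1; field_simp
    rw [this]
    exact (integrable_exp_neg_mul_sq h2ε).comp_sub_right L
  have step1 : (∫ x in Set.Ioi L, Real.exp (-x ^ 2 / (2 * ε))) ≤
      ∫ x in Set.Ioi L, Real.exp (-L ^ 2 / (2 * ε)) * Real.exp (-(x - L) ^ 2 / (2 * ε)) := by
    refine setIntegral_mono_on hint.integrableOn
      ((hint2.const_mul _).integrableOn) measurableSet_Ioi ?_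
    intro x hx
    rw [← Real.exp_add]
    apply Real.exp_le_exp.2
    rw [← add_div, div_le_div_iff_of_pos_right (by positivity)]
    have : L < x := hx
    nlinarith
  have step2 : (∫ x in Set.Ioi L, Real.exp (-L ^ 2 / (2 * ε)) * Real.exp (-(x - L) ^ 2 / (2 * ε)))
      = Real.exp (-L ^ 2 / (2 * ε)) * ∫ x in Set.Ioi L, Real.exp (-(x - L) ^ 2 / (2 * ε)) :=
    integral_const_mul _ _
  have hemb : MeasurableEmbedding (fun x : ℝ => x + L) :=
    (Homeomorph.addRight L).isClosedEmbedding.measurableEmbedding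
  have step3 : (∫ x in Set.Ioi L, Real.exp (-(x - L) ^ 2 / (2 * ε)))
      = ∫ x in Set.Ioi (0:ℝ), Real.exp (-x ^ 2 / (2 * ε)) := by
    have := (measurePreserving_add_right (volume : Measure ℝ) L).setIntegral_preimage_emb
      hemb (fun y => Real.exp (-(y - L) ^ 2 / (2 * ε))) (Set.Ioi L)
    rw [Set.preimage_add_const_Ioi, sub_self] at this
    rw [← this]
    congr 1
    funext x
    ring_nf
  have step4 : (∫ x in Set.Ioi (0:ℝ), Real.exp (-x ^ 2 / (2 * ε)))
      = Real.sqrt (2 * Real.pi * ε) / 2 := by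
    rw [hfun]
    have := integral_gaussian_Ioi ((2 * ε)⁻¹)
    simp_rw [neg_mul] at this ⊢
    rw [this]
    congr 2
    field_simp
  calc (∫ x in Set.Ioi L, Real.exp (-x ^ 2 / (2 * ε)))
      ≤ _ := step1
    _ = _ := step2
    _ = Real.exp (-L ^ 2 / (2 * ε)) * (Real.sqrt (2 * Real.pi * ε) / 2) := by
        rw [step3, step4]


theorem truncated_midpoint_total_error
    (ε b B L : ℝ) (hε : 0 < ε) (hb : |b| ≤ B) (hB : 0 ≤ B) (hL : 0 < L)
    (N : ℕ) (hN : 1 ≤ N)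
    (f : ℝ → ℂ)
    (hf : ∀ p : ℝ, f p =
      Complex.exp (-(p : ℂ) ^ 2 / (2 * (ε : ℂ)) + Complex.I * (b : ℂ) * (p : ℂ) / (ε : ℂ))) :
    ‖(∫ p : ℝ, f p) -
        (2 * L / N) * ∑ j ∈ Finset.Icc 1 N, f (-L + (2 * (j : ℝ) - 1) * L / N)‖ ≤
      Real.sqrt (2 * Real.pi * ε) * Real.exp (-L ^ 2 / (2 * ε)) +
        (L ^ 3 / (3 * (N : ℝ) ^ 2)) * (4 * (L + B) ^ 2 * ε ^ (-2 : ℤ) + ε⁻¹) := by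
  have hεC : (ε : ℂ) ≠ 0 := Complex.ofReal_ne_zero.2 hε.ne'
  set a : ℂ := -1 / (2 * (ε : ℂ)) with ha
  set c : ℂ := Complex.I * (b : ℂ) / (ε : ℂ) with hc
  set E : ℂ → ℂ := fun z => Complex.exp (a * z ^ 2 + c * z) with hE
  have hfE : f = fun p : ℝ => E (p : ℂ) := by
    funext p
    rw [hf, hE]
    congr 1
    rw [ha, hc]; ring
  subst hfE
  -- derivatives
  have hEd : ∀ z : ℂ, HasDerivAt E ((2 * a * z + c) * E z) z := by
    intro z
    have h1 : HasDerivAt (fun z : ℂ => a * z ^ 2 + c * z) (2 * a * z + c) z := by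
      have := ((hasDerivAt_pow 2 z).const_mul a).add ((hasDerivAt_id z).const_mul c)
      exact this.congr_deriv (by rw [show (2:ℕ) - 1 = 1 from rfl]; push_cast; ring)
    simpa [hE, mul_comm] using h1.cexp
  set f1 : ℝ → ℂ := fun p => (2 * a * p + c) * E p with hf1
  set f2 : ℝ → ℂ := fun p => (2 * a + (2 * a * p + c) ^ 2) * E p with hf2
  have hd1 : ∀ p : ℝ, HasDerivAt (fun q : ℝ => E (q : ℂ)) (f1 p) p := fun p =>
    (hEd p).comp_ofReal
  have hd2 : ∀ p : ℝ, HasDerivAt f1 (f2 p) p := by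
    intro p
    have hlin : ∀ z : ℂ, HasDerivAt (fun z : ℂ => 2 * a * z + c) (2 * a) z := by
      intro z
      simpa using ((hasDerivAt_id z).const_mul (2 * a)).add_const c
    have hlinR : HasDerivAt (fun p : ℝ => 2 * a * (p : ℂ) + c) (2 * a) p :=
      (hlin p).comp_ofReal
    have := hlinR.mul (hd1 p)
    exact this.congr_deriv (by simp only [hf1, hf2]; ring)
  have hc1 : Continuous f1 := continuous_iff_continuousAt.2 fun x => (hd2 x).continuousAt
  have hc0 : Continuous fun p : ℝ => E (p : ℂ) :=
    continuous_iff_continuousAt.2 fun x => (hd1 x).continuousAt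
  have hc2 : Continuous f2 := by
    apply Continuous.mul ?_ hc0
    fun_prop
  -- norm of E
  have hnorm : ∀ p : ℝ, ‖E (p : ℂ)‖ = Real.exp (-p ^ 2 / (2 * ε)) := by
    intro p
    have harg : a * (p : ℂ) ^ 2 + c * p
        = ((-p ^ 2 / (2 * ε) : ℝ) : ℂ) + ((b * p / ε : ℝ) : ℂ) * Complex.I := by
      rw [ha, hc]; push_cast; ring
    have hre : (a * (p : ℂ) ^ 2 + c * p).re = -p ^ 2 / (2 * ε) := by
      rw [harg]
      simp only [Complex.add_re, Complex.mul_re, Complex.ofReal_re, Complex.ofReal_im,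
        Complex.I_re, Complex.I_im]
      ring
    calc ‖E (p : ℂ)‖ = Real.exp ((a * (p : ℂ) ^ 2 + c * p).re) := by
          rw [hE, Complex.norm_exp]
      _ = Real.exp (-p ^ 2 / (2 * ε)) := by rw [hre]
  have hnorm1 : ∀ p : ℝ, ‖E (p : ℂ)‖ ≤ 1 := by
    intro p
    rw [hnorm p]
    apply Real.exp_le_one_iff.2
    rw [neg_div]
    have : (0:ℝ) ≤ p ^ 2 / (2 * ε) := by positivity
    linarith
  -- second derivative bound
  set M : ℝ := 4 * (L + B) ^ 2 * ε ^ (-2 : ℤ) + ε⁻¹ with hM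
  have hMbound : ∀ x : ℝ, |x| ≤ L → ‖f2 x‖ ≤ M := by
    intro x hx
    have h2a : 2 * a = ((-ε⁻¹ : ℝ) : ℂ) := by
      rw [ha]; push_cast; field_simp
    have hw : 2 * a * (x : ℂ) + c = ((-x / ε : ℝ) : ℂ) + ((b / ε : ℝ) : ℂ) * Complex.I := by
      rw [ha, hc]; push_cast; ring
    have hnw : ‖2 * a * (x : ℂ) + c‖ ^ 2 = (x / ε) ^ 2 + (b / ε) ^ 2 := by
      rw [hw, Complex.sq_norm, Complex.normSq_apply]
      simp [Complex.add_re, Complex.add_im]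
      ring
    calc ‖f2 x‖ = ‖2 * a + (2 * a * x + c) ^ 2‖ * ‖E (x : ℂ)‖ := norm_mul _ _
      _ ≤ (‖(2 * a : ℂ)‖ + ‖2 * a * (x : ℂ) + c‖ ^ 2) * 1 := by
          apply mul_le_mul ?_ (hnorm1 x) (norm_nonneg _) (by positivity)
          refine le_trans (norm_add_le _ _) ?_
          gcongr
          rw [← norm_pow]
      _ = ε⁻¹ + ((x / ε) ^ 2 + (b / ε) ^ 2) := by
          rw [hnw, h2a, Complex.norm_real, Real.norm_eq_abs, abs_neg,
            abs_of_nonneg (inv_pos.2 hε).le, mul_one]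
      _ ≤ M := by
          rw [hM]
          have hx2 : x ^ 2 ≤ L ^ 2 := by nlinarith [abs_nonneg x, sq_abs x, neg_abs_le x, le_abs_self x]
          have hb2 : b ^ 2 ≤ B ^ 2 := by nlinarith [sq_abs b, neg_abs_le b, le_abs_self b]
          have hzp : (ε : ℝ) ^ (-2 : ℤ) = (ε ^ 2)⁻¹ := by
            rw [zpow_neg, zpow_two, sq]
          rw [hzp, div_pow, div_pow, div_eq_mul_inv, div_eq_mul_inv]
          have h1 : x ^ 2 * (ε ^ 2)⁻¹ + b ^ 2 * (ε ^ 2)⁻¹ ≤ 4 * (L + B) ^ 2 * (ε ^ 2)⁻¹ := by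
            have : x ^ 2 + b ^ 2 ≤ 4 * (L + B) ^ 2 := by nlinarith
            have hinv : (0:ℝ) ≤ (ε ^ 2)⁻¹ := by positivity
            nlinarith
          linarith
  -- integrability
  have h2ε : (0:ℝ) < (2 * ε)⁻¹ := by positivity
  have hgauss : Integrable (fun x : ℝ => Real.exp (-x ^ 2 / (2 * ε))) := by
    have hfun : (fun x : ℝ => Real.exp (-x ^ 2 / (2 * ε)))
        = fun x => Real.exp (-(2 * ε)⁻¹ * x ^ 2) := by
      funext x; congr 1; field_simp
    rw [hfun]; exact integrable_exp_neg_mul_sq h2ε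
  have hIf : Integrable (fun p : ℝ => E (p : ℂ)) := by
    refine hgauss.mono' hc0.aestronglyMeasurable ?_
    exact Filter.Eventually.of_forall fun p => (hnorm p).le
  have hIL : (-L : ℝ) ≤ L := by linarith
  -- truncation split
  have hsplit : (∫ p : ℝ, E (p : ℂ)) - (∫ p in (-L)..L, E (p : ℂ))
      = (∫ p in Set.Iic (-L : ℝ), E (p : ℂ)) + ∫ p in Set.Ioi L, E (p : ℂ) := by
    have h1 := integral_Iic_add_Ioi (b := -L) hIf.integrableOn hIf.integrableOn
    have h2 : (∫ p in Set.Ioi (-L : ℝ), E (p : ℂ))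
        = (∫ p in Set.Ioc (-L : ℝ) L, E (p : ℂ)) + ∫ p in Set.Ioi L, E (p : ℂ) := by
      rw [← setIntegral_union (Set.Ioc_disjoint_Ioi le_rfl) measurableSet_Ioi
        hIf.integrableOn hIf.integrableOn, Set.Ioc_union_Ioi_eq_Ioi hIL]
    rw [intervalIntegral.integral_of_le hIL, ← h1, h2]
    abel
  have htail : ‖(∫ p in Set.Iic (-L : ℝ), E (p : ℂ)) + ∫ p in Set.Ioi L, E (p : ℂ)‖
      ≤ Real.sqrt (2 * Real.pi * ε) * Real.exp (-L ^ 2 / (2 * ε)) := by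
    have hR : ‖∫ p in Set.Ioi L, E (p : ℂ)‖
        ≤ Real.exp (-L ^ 2 / (2 * ε)) * (Real.sqrt (2 * Real.pi * ε) / 2) := by
      refine le_trans (norm_integral_le_integral_norm _) ?_
      have e1 : (∫ p in Set.Ioi L, ‖E (p : ℂ)‖)
          = ∫ p in Set.Ioi L, Real.exp (-p ^ 2 / (2 * ε)) := by
        congr 1; funext p; exact hnorm p
      rw [e1]
      exact gauss_tail ε L hε hL.le
    have hLt : ‖∫ p in Set.Iic (-L : ℝ), E (p : ℂ)‖
        ≤ Real.exp (-L ^ 2 / (2 * ε)) * (Real.sqrt (2 * Real.pi * ε) / 2) := by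
      refine le_trans (norm_integral_le_integral_norm _) ?_
      have e1 : (∫ p in Set.Iic (-L : ℝ), ‖E (p : ℂ)‖)
          = ∫ p in Set.Iic (-L : ℝ), Real.exp (-p ^ 2 / (2 * ε)) := by
        congr 1; funext p; exact hnorm p
      have e2 := integral_comp_neg_Iic (-L)
        (fun x => Real.exp (-x ^ 2 / (2 * ε)))
      simp only [neg_neg, neg_sq] at e2
      rw [e1, e2]
      exact gauss_tail ε L hε hL.le
    refine le_trans (norm_add_le _ _) ?_
    have : Real.exp (-L ^ 2 / (2 * ε)) * (Real.sqrt (2 * Real.pi * ε) / 2)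
        + Real.exp (-L ^ 2 / (2 * ε)) * (Real.sqrt (2 * Real.pi * ε) / 2)
        = Real.sqrt (2 * Real.pi * ε) * Real.exp (-L ^ 2 / (2 * ε)) := by ring
    linarith
  -- midpoint part
  set δ : ℝ := L / N with hδdef
  have hNR : (0:ℝ) < N := by
    have : (1:ℝ) ≤ N := by exact_mod_cast hN
    linarith
  have hNne : (N:ℝ) ≠ 0 := by positivity
  have hδ0 : 0 ≤ δ := by positivity
  set A : ℕ → ℝ := fun k => -L + 2 * L * k / N with hA
  have hIfI : ∀ u v : ℝ, IntervalIntegrable (fun p : ℝ => E (p : ℂ)) volume u v :=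
    fun u v => hc0.intervalIntegrable u v
  have hsum : (∑ k ∈ Finset.range N, ∫ x in A k..A (k+1), E (x : ℂ))
      = ∫ x in (-L : ℝ)..L, E (x : ℂ) := by
    rw [intervalIntegral.sum_integral_adjacent_intervals (fun k _ => hIfI _ _)]
    congr 1
    · simp [hA]
    · rw [hA]
      field_simp [hNne]
      ring
  have hmid : ∀ k : ℕ, k < N →
      ‖(∫ x in A k..A (k + 1), E (x : ℂ)) - (2 * δ : ℝ) • E ((A k + δ : ℝ) : ℂ)‖
        ≤ M * δ ^ 3 / 3 := by
    intro k hk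
    have hbnd : ∀ x ∈ Set.Icc ((A k + δ) - δ) ((A k + δ) + δ), ‖f2 x‖ ≤ M := by
      intro x hx
      obtain ⟨h1, h2⟩ := hx
      refine hMbound x ?_
      rw [abs_le]
      have hk1 : ((k : ℝ) + 1) ≤ N := by exact_mod_cast hk
      have hk0 : (0:ℝ) ≤ k := Nat.cast_nonneg k
      have hAk : A k = -L + 2 * L * k / N := by rw [hA]
      have hd : δ = L / N := hδdef
      rw [hAk, hd] at h1 h2
      constructor
      · have : (0:ℝ) ≤ 2 * L * k / N := by positivity
        linarith
      · have h3 : -L + 2 * L * (k:ℝ) / N + L / N + L / N = -L + 2 * L * ((k:ℝ) + 1) / N := by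
          field_simp [hNne]
          ring
        have h4 : 2 * L * ((k:ℝ) + 1) / N ≤ 2 * L := by
          rw [div_le_iff₀ hNR]
          nlinarith
        linarith
    have h := midpoint_err _ f1 f2 hd1 hd2 hc2 (A k + δ) δ M hδ0 hbnd
    have e1 : (A k + δ) - δ = A k := by ring
    have e2 : (A k + δ) + δ = A (k + 1) := by
      rw [hA, hδdef]; push_cast; ring
    rw [e1, e2] at h
    exact h
  have hreindex : (∑ j ∈ Finset.Icc 1 N, E ((-L + (2 * (j : ℝ) - 1) * L / N : ℝ) : ℂ))
      = ∑ k ∈ Finset.range N, E ((A k + δ : ℝ) : ℂ) := by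
    rw [← Finset.Ico_add_one_right_eq_Icc, Finset.sum_Ico_eq_sum_range]
    refine Finset.sum_congr rfl fun k _ => ?_
    congr 2
    rw [hA, hδdef]
    push_cast
    ring
  have hM0 : 0 ≤ M := by
    rw [hM]
    have : (0:ℝ) ≤ ε ^ (-2 : ℤ) := by positivity
    positivity
  have hmidsum : ‖(∫ x in (-L : ℝ)..L, E (x : ℂ))
      - (2 * (L:ℂ) / (N:ℂ)) * ∑ j ∈ Finset.Icc 1 N, E ((-L + (2 * (j : ℝ) - 1) * L / N : ℝ) : ℂ)‖
      ≤ (L ^ 3 / (3 * (N:ℝ) ^ 2)) * M := by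
    rw [hreindex]
    have hQ : (2 * (L:ℂ) / (N:ℂ)) * ∑ k ∈ Finset.range N, E ((A k + δ : ℝ) : ℂ)
        = ∑ k ∈ Finset.range N, ((2 * δ : ℝ) • E ((A k + δ : ℝ) : ℂ)) := by
      rw [Finset.mul_sum]
      refine Finset.sum_congr rfl fun k _ => ?_
      rw [Complex.real_smul]
      congr 1
      rw [hδdef]
      push_cast
      ring
    rw [hQ, ← hsum, ← Finset.sum_sub_distrib]
    refine le_trans (norm_sum_le _ _) ?_
    refine le_trans (Finset.sum_le_sum fun k hk => hmid k (Finset.mem_range.1 hk)) ?_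
    rw [Finset.sum_const, Finset.card_range, nsmul_eq_mul, hδdef]
    refine le_of_eq ?_
    field_simp [hNne]
  beta_reduce
  have hdecomp : (∫ p : ℝ, E (p:ℂ))
      - (2 * (L:ℂ) / (N:ℂ)) * ∑ j ∈ Finset.Icc 1 N,
          E ((-L + (2 * (j : ℝ) - 1) * L / N : ℝ) : ℂ)
      = ((∫ p : ℝ, E (p:ℂ)) - (∫ x in (-L:ℝ)..L, E (x:ℂ)))
        + ((∫ x in (-L:ℝ)..L, E (x:ℂ))
          - (2 * (L:ℂ) / (N:ℂ)) * ∑ j ∈ Finset.Icc 1 N,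
              E ((-L + (2 * (j : ℝ) - 1) * L / N : ℝ) : ℂ)) := by ring
  refine le_trans (le_trans (le_of_eq (congrArg norm hdecomp)) (norm_add_le _ _)) ?_
  rw [hsplit]
  exact add_le_add htail hmidsum
end

section
/- If Z is a complex symmetric d×d matrix with positive definite imaginary part, then Z is invertible and −Z^{−1} also has positive definite imaginary part. -/
open Matrix Complex

private lemma cv_dot {d : ℕ} (Y : Matrix (Fin d) (Fin d) ℝ) (x y : Fin d → ℝ) :
    (fun i => ((x i : ℂ))) ⬝ᵥ (Y.map (Complex.ofRealHom)) *ᵥ (fun i => ((y i : ℂ)))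
      = ((x ⬝ᵥ Y *ᵥ y : ℝ) : ℂ) := by
  have h1 := (RingHom.map_dotProduct Complex.ofRealHom x (Y *ᵥ y)).symm
  have h2 : ⇑Complex.ofRealHom ∘ (Y *ᵥ y)
      = (Y.map ⇑Complex.ofRealHom) *ᵥ (⇑Complex.ofRealHom ∘ y) := by
    funext i
    exact RingHom.map_mulVec Complex.ofRealHom Y y i
  rw [h2] at h1
  exact h1

private lemma sym_quad_im {d : ℕ} (W : Matrix (Fin d) (Fin d) ℂ) (hW : Wᵀ = W)
    (u : Fin d → ℂ) :
    (star u ⬝ᵥ W *ᵥ u).im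
      = (fun i => (u i).re) ⬝ᵥ (W.map Complex.im) *ᵥ (fun i => (u i).re)
        + (fun i => (u i).im) ⬝ᵥ (W.map Complex.im) *ᵥ (fun i => (u i).im) := by
  set a : Fin d → ℝ := fun i => (u i).re with ha
  set b : Fin d → ℝ := fun i => (u i).im with hb
  set A : Fin d → ℂ := fun i => ((a i : ℂ)) with hA
  set B : Fin d → ℂ := fun i => ((b i : ℂ)) with hB
  have hu : u = A + Complex.I • B := by
    funext i
    simp [hA, hB, ha, hb, Complex.ext_iff]
  have hsu : star u = A - Complex.I • B := by
    funext i
    simp [hA, hB, ha, hb, Complex.ext_iff]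
  set R : Matrix (Fin d) (Fin d) ℝ := W.map Complex.re with hR
  set Y : Matrix (Fin d) (Fin d) ℝ := W.map Complex.im with hY
  have hRs : Rᵀ = R := by rw [hR, ← Matrix.transpose_map, hW]
  have hYs : Yᵀ = Y := by rw [hY, ← Matrix.transpose_map, hW]
  have hWdec : W = R.map Complex.ofRealHom + Complex.I • (Y.map Complex.ofRealHom) := by
    ext i j
    simp [hR, hY, Matrix.map_apply, Complex.ext_iff]
  have key : ∀ (S : Matrix (Fin d) (Fin d) ℝ), Sᵀ = S →
      star u ⬝ᵥ (S.map Complex.ofRealHom) *ᵥ u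
        = ((a ⬝ᵥ S *ᵥ a + b ⬝ᵥ S *ᵥ b : ℝ) : ℂ) := by
    intro S hS
    have hcross : a ⬝ᵥ S *ᵥ b = b ⬝ᵥ S *ᵥ a :=
      calc a ⬝ᵥ S *ᵥ b = (a ᵥ* S) ⬝ᵥ b := Matrix.dotProduct_mulVec _ _ _
        _ = (S *ᵥ a) ⬝ᵥ b := by conv_lhs => rw [← hS, Matrix.vecMul_transpose]
        _ = b ⬝ᵥ S *ᵥ a := dotProduct_comm _ _
    rw [hsu, hu]
    simp only [Matrix.mulVec_add, Matrix.mulVec_smul, sub_dotProduct,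
      dotProduct_add, smul_dotProduct, dotProduct_smul,
      smul_eq_mul]
    rw [cv_dot, cv_dot, cv_dot, cv_dot, hcross]
    push_cast
    linear_combination (-((b ⬝ᵥ S *ᵥ b : ℝ) : ℂ)) * Complex.I_mul_I
  rw [hWdec]
  simp only [Matrix.add_mulVec, dotProduct_add, Matrix.smul_mulVec,
    dotProduct_smul, smul_eq_mul]
  rw [key R hRs, key Y hYs]
  simp

theorem siegel_neg_inv_mem
    (d : ℕ) (Z : Matrix (Fin d) (Fin d) ℂ)
    (hZ : Z.transpose = Z) (hImZ : (Z.map Complex.im).PosDef) :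
    IsUnit Z ∧ (-Z⁻¹).transpose = -Z⁻¹ ∧ ((-Z⁻¹).map Complex.im).PosDef := by
  set Y : Matrix (Fin d) (Fin d) ℝ := Z.map Complex.im with hYdef
  -- quadratic form positivity for nonzero complex vectors
  have hq : ∀ u : Fin d → ℂ, u ≠ 0 →
      0 < (fun i => (u i).re) ⬝ᵥ Y *ᵥ (fun i => (u i).re)
        + (fun i => (u i).im) ⬝ᵥ Y *ᵥ (fun i => (u i).im) := by
    intro u hu
    set a : Fin d → ℝ := fun i => (u i).re with ha
    set b : Fin d → ℝ := fun i => (u i).im with hb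
    have hab : a ≠ 0 ∨ b ≠ 0 := by
      by_contra h
      push_neg at h
      apply hu
      funext i
      have h1 : a i = 0 := by rw [h.1]; rfl
      have h2 : b i = 0 := by rw [h.2]; rfl
      exact Complex.ext h1 h2
    have hnn : ∀ v : Fin d → ℝ, 0 ≤ v ⬝ᵥ Y *ᵥ v := by
      intro v
      simpa using hImZ.posSemidef.dotProduct_mulVec_nonneg v
    have hpp : ∀ v : Fin d → ℝ, v ≠ 0 → 0 < v ⬝ᵥ Y *ᵥ v := by
      intro v hv
      simpa using hImZ.dotProduct_mulVec_pos hv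
    rcases hab with h | h
    · exact add_pos_of_pos_of_nonneg (hpp a h) (hnn b)
    · exact add_pos_of_nonneg_of_pos (hnn a) (hpp b h)
  have hpos : ∀ u : Fin d → ℂ, u ≠ 0 → 0 < (star u ⬝ᵥ Z *ᵥ u).im := by
    intro u hu
    rw [sym_quad_im Z hZ u]
    exact hq u hu
  have hdet : Z.det ≠ 0 := by
    intro h
    obtain ⟨v, hv0, hv⟩ := (Matrix.exists_mulVec_eq_zero_iff).mpr h
    have h2 := hpos v hv0
    rw [hv] at h2
    simp at h2
  have hdetu : IsUnit Z.det := isUnit_iff_ne_zero.mpr hdet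
  have hunit : IsUnit Z := (Matrix.isUnit_iff_isUnit_det Z).mpr hdetu
  have hsym : (-Z⁻¹)ᵀ = -Z⁻¹ := by
    rw [Matrix.transpose_neg, Matrix.transpose_nonsing_inv, hZ]
  refine ⟨hunit, hsym, Matrix.PosDef.of_dotProduct_mulVec_pos ?_ ?_⟩
  · -- Hermitian (= symmetric over ℝ)
    ext i j
    have h1 : (-Z⁻¹) j i = (-Z⁻¹) i j := congrFun (congrFun hsym i) j
    simp [Matrix.conjTranspose_apply, Matrix.map_apply, h1]
  · intro x hx
    have hXne : (fun i => ((x i : ℂ))) ≠ 0 := by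
      intro h
      apply hx
      funext i
      have := congrFun h i
      simpa using this
    set X : Fin d → ℂ := fun i => ((x i : ℂ)) with hX
    set u : Fin d → ℂ := Z⁻¹ *ᵥ X with hu
    have hZu : Z *ᵥ u = X := by
      rw [hu, Matrix.mulVec_mulVec, Matrix.mul_nonsing_inv Z hdetu, Matrix.one_mulVec]
    have hune : u ≠ 0 := by
      intro h
      apply hXne
      rw [← hZu, h, Matrix.mulVec_zero]
    -- Zᴴ is symmetric and its imaginary part is -Y
    have hZsym : ∀ i j, Z j i = Z i j := fun i j => congrFun (congrFun hZ i) j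
    have hZHs : (Zᴴ)ᵀ = Zᴴ := by
      ext i j
      simp only [Matrix.transpose_apply, Matrix.conjTranspose_apply]
      exact congrArg star (hZsym i j).symm
    have hZHim : Zᴴ.map Complex.im = -Y := by
      ext i j
      simp only [Matrix.map_apply, Matrix.conjTranspose_apply, Matrix.neg_apply, hYdef,
        Complex.star_def, Complex.conj_im]
      rw [hZsym i j]
    -- star X = X
    have hstarX : star X = X := by
      funext i
      simp [hX]
    -- the quadratic form
    have hdot : X ⬝ᵥ (-Z⁻¹) *ᵥ X = -(star u ⬝ᵥ Zᴴ *ᵥ u) := by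
      rw [Matrix.neg_mulVec, dotProduct_neg, ← hu]
      congr 1
      calc X ⬝ᵥ u = star X ⬝ᵥ u := by rw [hstarX]
        _ = (star u ᵥ* Zᴴ) ⬝ᵥ u := by rw [← hZu, Matrix.star_mulVec]
        _ = star u ⬝ᵥ Zᴴ *ᵥ u := (Matrix.dotProduct_mulVec _ _ _).symm
    have hgoal : star x ⬝ᵥ ((-Z⁻¹).map Complex.im) *ᵥ x
        = (star X ⬝ᵥ (-Z⁻¹) *ᵥ X).im := by
      rw [sym_quad_im (-Z⁻¹) hsym X]
      have hre : (fun i => (X i).re) = x := by funext i; simp [hX]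
      have him : (fun i => (X i).im) = (0 : Fin d → ℝ) := by funext i; simp [hX]
      rw [hre, him]
      simp
    rw [hgoal, hstarX, hdot]
    rw [Complex.neg_im, sym_quad_im Zᴴ hZHs u, hZHim]
    simp only [Matrix.neg_mulVec, dotProduct_neg]
    rw [neg_add, neg_neg, neg_neg]
    exact hq u hune
end

section
/- Let ε > 0, γ_i > 0, L_q > 0, M ≥ 1, Δq = 2L_q/M, grid q_k = −L_q + (2k−1)Δq/2 for k = 1,…,M, and S(x) = Σ_{k=1}^M (γ_i/(πε))^{1/2} e^{−(γ_i/ε)(x−q_k)²}. Then for all x ∈ [−L_q, L_q], S(x) > (1/(2Δq))(erf(2L_q√(γ_i/ε)) − erf(Δq√(γ_i/ε))). -/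
open intervalIntegral

namespace FSC

noncomputable def G (K c u : ℝ) : ℝ := K * Real.exp (-c * u ^ 2)

lemma G_cont (K c : ℝ) : Continuous (G K c) := by
  unfold G; fun_prop

lemma G_intable (K c a b : ℝ) : IntervalIntegrable (G K c) MeasureTheory.volume a b :=
  (G_cont K c).intervalIntegrable a b

lemma G_pos {K : ℝ} (hK : 0 < K) (c u : ℝ) : 0 < G K c u := by
  unfold G; positivity

lemma G_anti {K c : ℝ} (hK : 0 ≤ K) (hc : 0 ≤ c) {u v : ℝ} (hu : 0 ≤ u) (huv : u ≤ v) :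
    G K c v ≤ G K c u := by
  unfold G
  have h2 : u ^ 2 ≤ v ^ 2 := pow_le_pow_left₀ hu huv 2
  have : Real.exp (-c * v ^ 2) ≤ Real.exp (-c * u ^ 2) := by
    apply Real.exp_le_exp.2; nlinarith
  exact mul_le_mul_of_nonneg_left this hK

lemma G_even (K c u : ℝ) : G K c (-u) = G K c u := by unfold G; ring_nf

lemma G_int_le {K c : ℝ} (hK : 0 ≤ K) (hc : 0 ≤ c) {d Δ : ℝ} (hd : 0 ≤ d) (hΔ : 0 ≤ Δ) :
    (∫ t in d..(d + Δ), G K c t) ≤ Δ * G K c d := by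
  have h1 : (∫ t in d..(d + Δ), G K c t) ≤ ∫ _ in d..(d + Δ), G K c d := by
    apply integral_mono_on (by linarith) (G_intable K c _ _) (intervalIntegrable_const)
    intro t ht
    exact G_anti hK hc hd ht.1
  refine h1.trans ?_
  rw [integral_const, smul_eq_mul]
  ring_nf
  exact le_refl _

lemma G_int_pos {K : ℝ} (hK : 0 < K) (c : ℝ) {a b : ℝ} (hab : a < b) :
    0 < ∫ t in a..b, G K c t :=
  intervalIntegral_pos_of_pos (G_intable K c a b) (G_pos hK c) hab

lemma G_int_nonneg {K : ℝ} (hK : 0 ≤ K) (c : ℝ) {a b : ℝ} (hab : a ≤ b) :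
    0 ≤ ∫ t in a..b, G K c t := by
  apply intervalIntegral.integral_nonneg hab
  intro u _; have : 0 ≤ Real.exp (-c * u ^ 2) := (Real.exp_pos _).le
  unfold G; positivity

lemma G_split {K c : ℝ} (a b e : ℝ) :
    (∫ t in a..e, G K c t) = (∫ t in a..b, G K c t) + ∫ t in b..e, G K c t :=
  (integral_add_adjacent_intervals (G_intable K c a b) (G_intable K c b e)).symm

lemma G_shift {K c : ℝ} (hK : 0 ≤ K) (hc : 0 ≤ c) {p q s : ℝ} (hp : 0 ≤ p) (hpq : p ≤ q)
    (hs : 0 ≤ s) :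
    (∫ t in (p + s)..(q + s), G K c t) ≤ ∫ t in p..q, G K c t := by
  rw [← integral_comp_add_right (G K c) s]
  apply integral_mono_on hpq _ (G_intable K c _ _)
  · intro t ht
    exact G_anti hK hc (hp.trans ht.1) (by linarith)
  · exact (((G_cont K c).comp (continuous_id.add continuous_const)).intervalIntegrable _ _)

lemma G_sum_adjacent (K c : ℝ) (c0 Δ : ℝ) (n : ℕ) :
    (∑ i ∈ Finset.range n, ∫ t in (c0 + (i : ℝ) * Δ)..(c0 + ((i : ℝ) + 1) * Δ), G K c t)
      = ∫ t in c0..(c0 + (n : ℝ) * Δ), G K c t := by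
  have := intervalIntegral.sum_integral_adjacent_intervals
    (a := fun i : ℕ => c0 + (i : ℝ) * Δ) (n := n) (f := G K c)
    (fun k _ => G_intable K c _ _)
  simpa [Nat.cast_succ] using this

end FSC

open FSC

set_option maxHeartbeats 1000000 in
theorem finite_summation_curve_lower_bound
    (ε γi Lq : ℝ) (hε : 0 < ε) (hγ : 0 < γi) (hL : 0 < Lq)
    (M : ℕ) (hM : 1 ≤ M) (Δq : ℝ) (hΔ : Δq = 2 * Lq / M)
    (q : ℕ → ℝ) (hq : ∀ k, q k = -Lq + (2 * (k : ℝ) - 1) * Δq / 2)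
    (S : ℝ → ℝ)
    (hS : ∀ x, S x = ∑ k ∈ Finset.Icc 1 M,
      Real.sqrt (γi / (Real.pi * ε)) * Real.exp (-(γi / ε) * (x - q k) ^ 2)) :
    ∀ x ∈ Set.Icc (-Lq) Lq,
      (1 / (2 * Δq)) *
          ((2 / Real.sqrt Real.pi) * (∫ t in (0 : ℝ)..(2 * Lq * Real.sqrt (γi / ε)), Real.exp (-t ^ 2)) -
            (2 / Real.sqrt Real.pi) * ∫ t in (0 : ℝ)..(Δq * Real.sqrt (γi / ε)), Real.exp (-t ^ 2)) <
        S x := by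
  intro x hx
  obtain ⟨hx1, hx2⟩ := hx
  obtain ⟨cc, hcc_def⟩ : ∃ c : ℝ, c = γi / ε := ⟨_, rfl⟩
  obtain ⟨K, hK_def⟩ : ∃ k : ℝ, k = Real.sqrt (γi / (Real.pi * ε)) := ⟨_, rfl⟩
  simp only [← hcc_def] at hS ⊢
  simp only [← hK_def] at hS
  obtain ⟨s, hs_def⟩ : ∃ t : ℝ, t = Real.sqrt cc := ⟨_, rfl⟩
  simp only [← hs_def] at hS ⊢
  have hcc : 0 < cc := hcc_def ▸ div_pos hγ hε
  have hs : 0 < s := hs_def ▸ Real.sqrt_pos.2 hcc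
  have hK : 0 < K := hK_def ▸ Real.sqrt_pos.2 (by positivity)
  have hπ : 0 < Real.sqrt Real.pi := Real.sqrt_pos.2 Real.pi_pos
  have hM1 : (1 : ℝ) ≤ (M : ℝ) := by exact_mod_cast hM
  have hΔpos : 0 < Δq := by rw [hΔ]; positivity
  have hMΔ : (M : ℝ) * Δq = 2 * Lq := by rw [hΔ]; field_simp
  have hΔ2L : Δq ≤ 2 * Lq := by nlinarith [mul_le_mul_of_nonneg_right hM1 hΔpos.le]
  -- √π * K = s
  have hKs : K * Real.sqrt Real.pi = s := by
    rw [hK_def, ← Real.sqrt_mul (by positivity) Real.pi, hs_def, hcc_def]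
    congr 1
    field_simp
  -- RHS rewriting
  have hint : ∀ a b : ℝ, IntervalIntegrable (fun t : ℝ => Real.exp (-t ^ 2))
      MeasureTheory.volume a b := fun a b => Continuous.intervalIntegrable (by fun_prop) a b
  have hsub : (∫ t in (0:ℝ)..(2 * Lq * s), Real.exp (-t ^ 2))
      - (∫ t in (0:ℝ)..(Δq * s), Real.exp (-t ^ 2))
      = ∫ t in (Δq * s)..(2 * Lq * s), Real.exp (-t ^ 2) := by
    have h := integral_add_adjacent_intervals (a := (0:ℝ)) (b := Δq * s) (c := 2 * Lq * s)
      (f := fun t : ℝ => Real.exp (-t ^ 2)) (hint _ _) (hint _ _)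
    linarith
  have hchg : (∫ t in (Δq * s)..(2 * Lq * s), Real.exp (-t ^ 2))
      = s * ∫ u in Δq..(2 * Lq), Real.exp (-(cc * u ^ 2)) := by
    have h := integral_comp_mul_right (a := Δq) (b := 2 * Lq)
      (fun t : ℝ => Real.exp (-t ^ 2)) hs.ne'
    have h2 : ∀ u : ℝ, Real.exp (-(u * s) ^ 2) = Real.exp (-(cc * u ^ 2)) := by
      intro u
      congr 1
      rw [mul_pow, hs_def, Real.sq_sqrt hcc.le]
      ring
    simp only [h2] at h
    rw [h, smul_eq_mul]
    field_simp
  have hGint : (∫ u in Δq..(2 * Lq), G K cc u)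
      = K * ∫ u in Δq..(2 * Lq), Real.exp (-(cc * u ^ 2)) := by
    rw [← intervalIntegral.integral_const_mul]
    apply intervalIntegral.integral_congr
    intro u _
    simp [G, neg_mul]
  have hRHS : (1 / (2 * Δq)) *
          ((2 / Real.sqrt Real.pi) * (∫ t in (0 : ℝ)..(2 * Lq * s), Real.exp (-t ^ 2)) -
            (2 / Real.sqrt Real.pi) * ∫ t in (0 : ℝ)..(Δq * s), Real.exp (-t ^ 2))
      = (1 / Δq) * ∫ u in Δq..(2 * Lq), G K cc u := by
    rw [hGint]
    have e1 : (2 / Real.sqrt Real.pi) * (∫ t in (0 : ℝ)..(2 * Lq * s), Real.exp (-t ^ 2)) -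
            (2 / Real.sqrt Real.pi) * (∫ t in (0 : ℝ)..(Δq * s), Real.exp (-t ^ 2))
        = (2 / Real.sqrt Real.pi) * (s * ∫ u in Δq..(2 * Lq), Real.exp (-(cc * u ^ 2))) := by
      rw [← hchg, ← hsub]; ring
    rw [e1, ← hKs]
    field_simp
  rw [hRHS]
  clear hRHS hsub hchg hGint hint hKs
  -- setup for the sum
  obtain ⟨A, hA_def⟩ : ∃ a : ℝ, a = x + Lq := ⟨_, rfl⟩
  have hA0 : 0 ≤ A := by rw [hA_def]; linarith
  have hA2 : A ≤ 2 * Lq := by rw [hA_def]; linarith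
  obtain ⟨jf, hjf_def⟩ : ∃ n : ℕ, n = Nat.floor (A / Δq + 1 / 2) := ⟨_, rfl⟩
  obtain ⟨j, hj_def⟩ : ∃ n : ℕ, n = min M jf := ⟨_, rfl⟩
  have hjM : j ≤ M := by rw [hj_def]; exact min_le_left _ _
  have hjf : (j : ℝ) ≤ A / Δq + 1 / 2 := by
    have h0 : j ≤ jf := by rw [hj_def]; exact min_le_right _ _
    have h1 : (j : ℝ) ≤ (jf : ℝ) := by exact_mod_cast h0
    have h2 : (jf : ℝ) ≤ A / Δq + 1 / 2 := by
      rw [hjf_def]; exact Nat.floor_le (by positivity)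
    linarith
  have hαnn : (j : ℝ) * Δq ≤ A + Δq / 2 := by
    have h := mul_le_mul_of_nonneg_right hjf hΔpos.le
    have he : (A / Δq + 1 / 2) * Δq = A + Δq / 2 := by field_simp
    rw [he] at h; linarith
  obtain ⟨UL, hUL_def⟩ : ∃ u : ℝ, u = A + Δq / 2 := ⟨_, rfl⟩
  obtain ⟨α, hα_def⟩ : ∃ u : ℝ, u = UL - (j : ℝ) * Δq := ⟨_, rfl⟩
  obtain ⟨β, hβ_def⟩ : ∃ u : ℝ, u = (j : ℝ) * Δq + Δq / 2 - A := ⟨_, rfl⟩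
  obtain ⟨UR, hUR_def⟩ : ∃ u : ℝ, u = 2 * Lq + Δq / 2 - A := ⟨_, rfl⟩
  have hα0 : 0 ≤ α := by rw [hα_def, hUL_def]; linarith
  have hαβ : α + β = Δq := by rw [hα_def, hβ_def, hUL_def]; ring
  have hαΔ : α < Δq := by
    rcases le_or_gt M jf with h | h
    · have hjeq : j = M := by rw [hj_def, min_eq_left h]
      rw [hα_def, hUL_def, hjeq]
      linarith
    · have hjeq : j = jf := by rw [hj_def, min_eq_right h.le]
      have hlt : A / Δq + 1 / 2 < (jf : ℝ) + 1 := by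
        rw [hjf_def]; exact Nat.lt_floor_add_one _
      have hA' : A < ((j : ℝ) + 1 / 2) * Δq := by
        rw [hjeq]
        have h2 : A / Δq < (jf : ℝ) + 1 / 2 := by linarith
        calc A = (A / Δq) * Δq := by field_simp
        _ < ((jf : ℝ) + 1 / 2) * Δq := by exact mul_lt_mul_of_pos_right h2 hΔpos
      rw [hα_def, hUL_def]
      linarith [hA']
  -- rewrite the sum
  have hsum0 : S x = ∑ i ∈ Finset.range M, G K cc (A - ((i : ℝ) + 1 / 2) * Δq) := by
    rw [hS x, show Finset.Icc 1 M = Finset.Ico 1 (M + 1) from (Finset.Ico_add_one_right_eq_Icc 1 M).symm,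
      Finset.sum_Ico_eq_sum_range]
    simp only [Nat.add_sub_cancel]
    apply Finset.sum_congr rfl
    intro i _
    rw [hq (1 + i)]
    have harg : x - (-Lq + (2 * ((1 + i : ℕ) : ℝ) - 1) * Δq / 2)
        = A - ((i : ℝ) + 1 / 2) * Δq := by
      rw [hA_def]; push_cast; ring
    rw [harg]
    rfl
  clear hS hq
  have hsplit : (∑ i ∈ Finset.range M, G K cc (A - ((i : ℝ) + 1 / 2) * Δq))
      = (∑ i ∈ Finset.range j, G K cc (A - ((i : ℝ) + 1 / 2) * Δq))
        + ∑ i ∈ Finset.range (M - j), G K cc (A - (((j + i : ℕ) : ℝ) + 1 / 2) * Δq) := by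
    rw [Finset.range_eq_Ico, ← Finset.sum_Ico_consecutive _ (Nat.zero_le j) hjM,
      Finset.sum_Ico_eq_sum_range, Finset.sum_Ico_eq_sum_range]
    simp
  -- left part
  have hL1 : (1 / Δq) * (∫ t in α..UL, G K cc t)
      ≤ ∑ i ∈ Finset.range j, G K cc (A - ((i : ℝ) + 1 / 2) * Δq) := by
    have hrefl : (∑ i ∈ Finset.range j, G K cc (A - ((i : ℝ) + 1 / 2) * Δq))
        = ∑ i ∈ Finset.range j, G K cc (α + (i : ℝ) * Δq) := by
      rw [← Finset.sum_range_reflect (fun i => G K cc (α + (i : ℝ) * Δq)) j]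
      apply Finset.sum_congr rfl
      intro i hi
      have hi' : i < j := Finset.mem_range.1 hi
      congr 1
      have hcast : ((j - 1 - i : ℕ) : ℝ) = (j : ℝ) - 1 - (i : ℝ) := by
        have h1 : j - 1 - i = j - (1 + i) := by omega
        rw [h1, Nat.cast_sub (by omega)]
        push_cast; ring
      rw [hcast, hα_def, hUL_def]; ring
    have hULα : UL = α + (j : ℝ) * Δq := by rw [hα_def]; ring
    rw [hrefl, hULα, ← G_sum_adjacent K cc α Δq j, Finset.mul_sum]
    apply Finset.sum_le_sum
    intro i hi
    have h0 : 0 ≤ α + (i : ℝ) * Δq := add_nonneg hα0 (by positivity)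
    have hb := G_int_le (K := K) (c := cc) hK.le hcc.le h0 hΔpos.le
    have hEnd : α + ((i : ℝ) + 1) * Δq = (α + (i : ℝ) * Δq) + Δq := by ring
    rw [hEnd]
    rw [div_mul_eq_mul_div, one_mul, div_le_iff₀ hΔpos]
    linarith [hb]
  -- right part
  have hβU : β + ((M - j : ℕ) : ℝ) * Δq = UR := by
    rw [Nat.cast_sub hjM, hβ_def, hUR_def]
    linear_combination hMΔ
  have hβ0 : j < M → 0 < β := by
    intro hjlt
    have hjeq : j = jf := by
      rcases le_total M jf with h | h
      · exfalso; rw [hj_def, min_eq_left h] at hjlt; exact lt_irrefl _ hjlt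
      · rw [hj_def, min_eq_right h]
    have hlt : A / Δq + 1 / 2 < (jf : ℝ) + 1 := by
      rw [hjf_def]; exact Nat.lt_floor_add_one _
    have h2 : A / Δq < (j : ℝ) + 1 / 2 := by rw [hjeq]; linarith
    have h3 : A < ((j : ℝ) + 1 / 2) * Δq := by
      calc A = (A / Δq) * Δq := by field_simp
      _ < ((j : ℝ) + 1 / 2) * Δq := mul_lt_mul_of_pos_right h2 hΔpos
    rw [hβ_def]; linarith [h3]
  have hR1 : (1 / Δq) * (∫ t in β..UR, G K cc t)
      ≤ ∑ i ∈ Finset.range (M - j), G K cc (A - (((j + i : ℕ) : ℝ) + 1 / 2) * Δq) := by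
    have hrw : ∀ i : ℕ, G K cc (A - (((j + i : ℕ) : ℝ) + 1 / 2) * Δq)
        = G K cc (β + (i : ℝ) * Δq) := by
      intro i
      rw [← G_even K cc (β + (i : ℝ) * Δq)]
      congr 1
      rw [hβ_def]; push_cast; ring
    simp only [hrw]
    rw [← hβU, ← G_sum_adjacent K cc β Δq (M - j), Finset.mul_sum]
    apply Finset.sum_le_sum
    intro i hi
    have hi' : i < M - j := Finset.mem_range.1 hi
    have hjlt : j < M := by omega
    have hβpos := hβ0 hjlt
    have h0 : 0 ≤ β + (i : ℝ) * Δq := add_nonneg hβpos.le (by positivity)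
    have hb := G_int_le (K := K) (c := cc) hK.le hcc.le h0 hΔpos.le
    have hEnd : β + ((i : ℝ) + 1) * Δq = (β + (i : ℝ) * Δq) + Δq := by ring
    rw [hEnd]
    rw [div_mul_eq_mul_div, one_mul, div_le_iff₀ hΔpos]
    linarith [hb]
  -- final strict comparison of integrals
  have hfin : (∫ t in Δq..(2 * Lq), G K cc t)
      < (∫ t in α..UL, G K cc t) + ∫ t in β..UR, G K cc t := by
    rcases eq_or_lt_of_le hjM with hjeq | hjlt
    · -- j = M : right integral degenerate
      have hβUR : β = UR := by
        rw [hβ_def, hUR_def, hjeq]; linear_combination hMΔ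
      have hIR : (∫ t in β..UR, G K cc t) = 0 := by rw [hβUR, integral_same]
      have hUL2 : 2 * Lq ≤ UL := by
        have h5 : ((M : ℝ)) * Δq ≤ A + Δq / 2 := by rw [← hjeq]; exact hαnn
        rw [hUL_def]; linarith [hMΔ, h5]
      have e1 := G_split (K := K) (c := cc) α Δq UL
      have e2 := G_split (K := K) (c := cc) Δq (2 * Lq) UL
      have p1 : 0 < ∫ t in α..Δq, G K cc t := G_int_pos hK cc hαΔ
      have p2 : 0 ≤ ∫ t in (2 * Lq)..UL, G K cc t := G_int_nonneg hK.le cc hUL2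
      rw [hIR]
      linarith
    · rcases Nat.eq_zero_or_pos j with hj0 | hjpos
      · -- j = 0 : left integral degenerate
        have hαUL : α = UL := by rw [hα_def, hj0]; push_cast; ring
        have hIL : (∫ t in α..UL, G K cc t) = 0 := by rw [hαUL, integral_same]
        have hjf0 : jf = 0 := by
          have h00 : min M jf = 0 := by rw [← hj_def]; exact hj0
          rcases Nat.min_eq_zero_iff.1 h00 with h | h
          · omega
          · exact h
        have hAsmall : A < Δq / 2 := by
          have h01 : A / Δq + 1 / 2 < 1 := by
            have h02 := Nat.floor_eq_zero.1 (hjf_def ▸ hjf0)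
            exact_mod_cast h02
          have h2 : A / Δq < 1 / 2 := by linarith
          have h03 := mul_lt_mul_of_pos_right h2 hΔpos
          rw [div_mul_cancel₀ _ hΔpos.ne'] at h03
          linarith
        have hUR2 : 2 * Lq ≤ UR := by rw [hUR_def]; linarith
        have hαpos : 0 < α := by rw [hα_def, hUL_def, hj0]; push_cast; linarith
        have hβΔ : β < Δq := by linarith [hαβ]
        have hβ0' : 0 < β := hβ0 hjlt
        have e1 := G_split (K := K) (c := cc) β Δq UR
        have e2 := G_split (K := K) (c := cc) Δq (2 * Lq) UR
        have p1 : 0 < ∫ t in β..Δq, G K cc t := G_int_pos hK cc hβΔ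
        have p2 : 0 ≤ ∫ t in (2 * Lq)..UR, G K cc t := G_int_nonneg hK.le cc hUR2
        rw [hIL]
        linarith
      · -- middle case
        have hβpos : 0 < β := hβ0 hjlt
        have hβΔ : β ≤ Δq := by linarith [hαβ, hα0]
        have hj1 : (1 : ℝ) ≤ (j : ℝ) := Nat.one_le_cast.mpr hjpos
        have hUL1 : Δq ≤ UL := by
          have h1 : 1 * Δq ≤ (j : ℝ) * Δq := mul_le_mul_of_nonneg_right hj1 hΔpos.le
          rw [hUL_def]; linarith [hαnn]
        have hUL2 : UL ≤ 2 * Lq := by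
          have hjeq : j = jf := by
            rcases le_total M jf with h | h
            · exfalso; rw [hj_def, min_eq_left h] at hjlt; exact lt_irrefl _ hjlt
            · rw [hj_def, min_eq_right h]
          have hlt : A / Δq + 1 / 2 < (jf : ℝ) + 1 := by
            rw [hjf_def]; exact Nat.lt_floor_add_one _
          have h2 : A / Δq < (j : ℝ) + 1 / 2 := by rw [hjeq]; linarith
          have h3 : A < ((j : ℝ) + 1 / 2) * Δq := by
            calc A = (A / Δq) * Δq := by field_simp
            _ < ((j : ℝ) + 1 / 2) * Δq := mul_lt_mul_of_pos_right h2 hΔpos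
          have hjM' : (j : ℝ) + 1 ≤ (M : ℝ) := by exact_mod_cast hjlt
          have h4 : ((j : ℝ) + 1) * Δq ≤ (M : ℝ) * Δq := mul_le_mul_of_nonneg_right hjM' hΔpos.le
          rw [hUL_def]; nlinarith [hMΔ, h3, h4]
        have e1 := G_split (K := K) (c := cc) Δq UL (2 * Lq)
        have e2 := G_split (K := K) (c := cc) α Δq UL
        have p1 : 0 < ∫ t in α..Δq, G K cc t := G_int_pos hK cc hαΔ
        have e3 : (∫ t in UL..(2 * Lq), G K cc t)
            ≤ ∫ t in β..(β + (2 * Lq - UL)), G K cc t := by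
          have h := G_shift (K := K) (c := cc) hK.le hcc.le (p := β)
            (q := β + (2 * Lq - UL)) (s := UL - β) hβpos.le (by linarith) (by linarith)
          have h1 : β + (UL - β) = UL := by ring
          have h2 : β + (2 * Lq - UL) + (UL - β) = 2 * Lq := by ring
          rw [h1, h2] at h
          exact h
        have e4 := G_split (K := K) (c := cc) β (β + (2 * Lq - UL)) UR
        have p2 : 0 ≤ ∫ t in (β + (2 * Lq - UL))..UR, G K cc t := by
          apply G_int_nonneg hK.le cc
          linarith [hUR_def.le, hUL_def.le, hβΔ, hUR_def.ge, hUL_def.ge]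
        linarith
  -- combine everything
  have hμ : 0 < 1 / Δq := by positivity
  calc (1 / Δq) * ∫ u in Δq..(2 * Lq), G K cc u
      < (1 / Δq) * ((∫ t in α..UL, G K cc t) + ∫ t in β..UR, G K cc t) :=
        mul_lt_mul_of_pos_left hfin hμ
    _ = (1 / Δq) * (∫ t in α..UL, G K cc t) + (1 / Δq) * ∫ t in β..UR, G K cc t := by ring
    _ ≤ (∑ i ∈ Finset.range j, G K cc (A - ((i : ℝ) + 1 / 2) * Δq))
        + ∑ i ∈ Finset.range (M - j), G K cc (A - (((j + i : ℕ) : ℝ) + 1 / 2) * Δq) :=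
        add_le_add hL1 hR1
    _ = S x := by rw [hsum0, hsplit]
end
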